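/- Let m ≥ 1, d ≥ 1 and n = (m+1)d. For each i ∈ {1,…,d} let Y_i ∈ ℝ^n be the vector whose coordinates in positions (i−1)(m+1)+1 through i(m+1) are (1, σ_{0,i}, σ_{1,i}, …, σ_{m−1,i}) and whose other coordinates are zero, where the md real numbers {σ_{j,i} : 0 ≤ j ≤ m−1, 1 ≤ i ≤ d} form a family that is algebraically independent over ℚ. Then for every nonempty J ⊆ {1,…,d} and every e ∈ {#J, …, #J·(m+1) − 1}, the subspace A_J = span{Y_j : j ∈ J} (of dimension #J) is (e, #J − g(#J,e,n))-irrational. -/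

import Mathlib

noncomputable section

open Finset Module

/-- A vector of `ℝⁿ` with integer coordinates. -/
def IsIntVec {n : ℕ} (v : EuclideanSpace ℝ (Fin n)) : Prop :=
  ∀ i, ∃ z : ℤ, v i = (z : ℝ)

/-- A rational subspace of `ℝⁿ`: one spanned by vectors with rational coordinates. -/
def IsRationalSubspace {n : ℕ} (B : Submodule ℝ (EuclideanSpace ℝ (Fin n))) : Prop :=
  ∃ s : Set (EuclideanSpace ℝ (Fin n)),
    (∀ v ∈ s, ∀ i, ∃ q : ℚ, v i = (q : ℝ)) ∧ Submodule.span ℝ s = B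

/-- `A` is `(e,j)`-irrational: every rational subspace `B` of dimension `e` satisfies
`dim (A ⊓ B) < j + g(dim A, e, n)` where `g(d,e,n) = max 0 (d+e-n)`. -/
def IsIrrational {n : ℕ} (A : Submodule ℝ (EuclideanSpace ℝ (Fin n))) (e j : ℕ) : Prop :=
  ∀ B : Submodule ℝ (EuclideanSpace ℝ (Fin n)),
    IsRationalSubspace B → finrank ℝ B = e →
      finrank ℝ ↥(A ⊓ B) < j + (finrank ℝ A + e - n)

/-- The angle `ω(X,Y) = ‖X∧Y‖ / (‖X‖·‖Y‖)`. -/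
def omegaAngle {n : ℕ} (X Y : EuclideanSpace ℝ (Fin n)) : ℝ :=
  Real.sqrt (‖X‖ ^ 2 * ‖Y‖ ^ 2 - (inner ℝ X Y : ℝ) ^ 2) / (‖X‖ * ‖Y‖)

/-- First angle `ψ₁(A,B)` between two subspaces. -/
def psiOne {n : ℕ} (A B : Submodule ℝ (EuclideanSpace ℝ (Fin n))) : ℝ :=
  sInf {t | ∃ X ∈ A, X ≠ 0 ∧ ∃ Y ∈ B, Y ≠ 0 ∧ t = omegaAngle X Y}

/-- `‖X₁ ∧ ⋯ ∧ X_e‖`, as the square root of the Gram determinant. -/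
def gramNorm {n e : ℕ} (X : Fin e → EuclideanSpace ℝ (Fin n)) : ℝ :=
  Real.sqrt (Matrix.of fun i j : Fin e => (inner ℝ (X i) (X j) : ℝ)).det

/-- `X` is a `ℤ`-basis of the lattice `B ∩ ℤⁿ`. -/
def IsZBasis {n e : ℕ} (X : Fin e → EuclideanSpace ℝ (Fin n))
    (B : Submodule ℝ (EuclideanSpace ℝ (Fin n))) : Prop :=
  (∀ i, X i ∈ B) ∧ (∀ i, IsIntVec (X i)) ∧ LinearIndependent ℝ X ∧
    ∀ v ∈ B, IsIntVec v → ∃ c : Fin e → ℤ, v = ∑ i, (c i : ℝ) • X i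

/-- The height `H(B)` of a rational subspace: the common value of `‖X₁ ∧ ⋯ ∧ X_e‖`
over `ℤ`-bases of the lattice `B ∩ ℤⁿ`. -/
def height {n : ℕ} (B : Submodule ℝ (EuclideanSpace ℝ (Fin n))) : ℝ :=
  sSup {h | ∃ e : ℕ, ∃ X : Fin e → EuclideanSpace ℝ (Fin n), IsZBasis X B ∧ h = gramNorm X}

/-- The Diophantine exponent `μ_n(A|e)₁ ∈ ℝ ∪ {+∞}`. -/
def diophExp {n : ℕ} (A : Submodule ℝ (EuclideanSpace ℝ (Fin n))) (e : ℕ) : EReal :=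
  sSup {x : EReal | ∃ μ : ℝ, x = (μ : ℝ) ∧ 0 < μ ∧
    {B : Submodule ℝ (EuclideanSpace ℝ (Fin n)) |
      IsRationalSubspace B ∧ finrank ℝ B = e ∧ psiOne A B ≤ height B ^ (-μ)}.Infinite}

/-- The vector `Y_i ∈ ℝⁿ` (`n = (m+1)d`, indices `0`-based) whose coordinates in the `i`-th
block of length `m+1` are `(1, σ 0 i, σ 1 i, …, σ (m−1) i)` and which vanishes elsewhere. -/
def Yvec (n m : ℕ) (σ : ℕ → ℕ → ℝ) (i : ℕ) : EuclideanSpace ℝ (Fin n) :=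
  WithLp.toLp 2 fun t => if (t : ℕ) = i * (m + 1) then 1
    else if i * (m + 1) < (t : ℕ) ∧ (t : ℕ) < (i + 1) * (m + 1) then
      σ ((t : ℕ) - i * (m + 1) - 1) i
    else 0

theorem sigma_indep (m d : ℕ) (σ : ℕ → ℕ → ℝ)
    (hσ : AlgebraicIndependent ℚ (fun p : Fin m × Fin d => σ (p.1 : ℕ) (p.2 : ℕ)))
    (j : Fin d) (c : Fin (m+1) → ℚ)
    (h : (c 0 : ℝ) + ∑ l : Fin m, (c l.succ : ℝ) * σ (l : ℕ) (j : ℕ) = 0) :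
    ∀ i, c i = 0 := by
  set p : MvPolynomial (Fin m × Fin d) ℚ :=
    MvPolynomial.C (c 0) + ∑ l : Fin m, MvPolynomial.C (c l.succ) * MvPolynomial.X (l, j) with hp
  have hev : MvPolynomial.aeval (fun p : Fin m × Fin d => σ (p.1 : ℕ) (p.2 : ℕ)) p = 0 := by
    simp only [hp, map_add, map_sum, map_mul, MvPolynomial.aeval_C, MvPolynomial.aeval_X]
    simpa using h
  have hp0 : p = 0 := by
    apply hσ
    simpa using hev
  have h0 : c 0 = 0 := by
    have := congrArg (MvPolynomial.coeff 0) hp0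
    simp [hp, MvPolynomial.coeff_sum, MvPolynomial.coeff_zero_X] at this
    exact this
  have hs : ∀ l : Fin m, c l.succ = 0 := by
    intro l0
    have := congrArg (MvPolynomial.coeff (Finsupp.single (l0, j) 1)) hp0
    simp only [hp, MvPolynomial.coeff_add, MvPolynomial.coeff_sum, MvPolynomial.coeff_C_mul,
      MvPolynomial.coeff_X', MvPolynomial.coeff_C, MvPolynomial.coeff_zero] at this
    rw [if_neg (by
        intro hEq
        have : (1:ℕ) = 0 := by simpa using (Finsupp.single_eq_zero.mp hEq.symm)
        omega),
      Finset.sum_eq_single_of_mem l0 (Finset.mem_univ _)] at this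
    · simpa using this
    · intro b _ hb
      rw [if_neg, mul_zero]
      intro hEq
      have h2 := Finsupp.single_left_injective (one_ne_zero (α := ℕ)) hEq
      exact hb (congrArg Prod.fst h2)
  intro i
  refine Fin.cases h0 hs i


lemma block_lt {m d n : ℕ} (hn : n = (m+1)*d) (j : Fin d) {l : ℕ} (hl : l < m+1) :
    (j:ℕ)*(m+1)+l < n := by
  have hj : (j:ℕ)+1 ≤ d := j.isLt
  have h2 : ((j:ℕ)+1)*(m+1) ≤ d*(m+1) := Nat.mul_le_mul_right _ hj
  have h3 : ((j:ℕ)+1)*(m+1) = (j:ℕ)*(m+1)+(m+1) := by ring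
  have h4 : n = d*(m+1) := by rw [hn]; ring
  linarith

lemma block_inj {m : ℕ} {j₁ j₂ l₁ l₂ : ℕ} (h₁ : l₁ < m+1) (h₂ : l₂ < m+1)
    (h : j₁*(m+1)+l₁ = j₂*(m+1)+l₂) : j₁ = j₂ ∧ l₁ = l₂ := by
  have key : ∀ j l : ℕ, l < m+1 → (j*(m+1)+l)/(m+1) = j := by
    intro j l hl
    rw [Nat.mul_comm j, Nat.mul_add_div (by omega)]
    simp [Nat.div_eq_of_lt hl]
  have hj : j₁ = j₂ := by
    have := key j₁ l₁ h₁
    rw [h, key j₂ l₂ h₂] at this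
    omega
  subst hj
  exact ⟨rfl, by omega⟩

lemma Yvec_dot {m d n : ℕ} (hn : n = (m+1)*d) (σ : ℕ → ℕ → ℝ) (j : Fin d)
    (g : Fin n → ℝ) :
    ∑ t, g t * Yvec n m σ (j:ℕ) t
      = g ⟨(j:ℕ)*(m+1), block_lt hn j (Nat.succ_pos m)⟩
        + ∑ l : Fin m, g ⟨(j:ℕ)*(m+1)+((l:ℕ)+1), block_lt hn j (by omega)⟩ * σ (l:ℕ) (j:ℕ) := by
  classical
  have hjs : ((j:ℕ)+1)*(m+1) = (j:ℕ)*(m+1)+(m+1) := by ring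
  set S : Finset (Fin n) :=
    Finset.image (fun l : Fin (m+1) => (⟨(j:ℕ)*(m+1)+(l:ℕ), block_lt hn j l.isLt⟩ : Fin n))
      Finset.univ with hS
  have hmem : ∀ t : Fin n, t ∈ S ↔ (j:ℕ)*(m+1) ≤ (t:ℕ) ∧ (t:ℕ) < (j:ℕ)*(m+1)+(m+1) := by
    intro t
    simp only [hS, Finset.mem_image, Finset.mem_univ, true_and]
    constructor
    · rintro ⟨l, rfl⟩
      have := l.isLt
      constructor <;> simp <;> omega
    · rintro ⟨h1, h2⟩
      exact ⟨⟨(t:ℕ) - (j:ℕ)*(m+1), by omega⟩, by apply Fin.ext; simp; omega⟩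
  have hzero : ∀ t ∈ Finset.univ, t ∉ S → g t * Yvec n m σ (j:ℕ) t = 0 := by
    intro t _ ht
    rw [hmem] at ht
    have : Yvec n m σ (j:ℕ) t = 0 := by
      unfold Yvec
      simp only [PiLp.toLp_apply]
      rw [if_neg (by omega), if_neg (by rw [hjs]; omega)]
    rw [this, mul_zero]
  rw [← Finset.sum_subset (Finset.subset_univ S) hzero, hS,
    Finset.sum_image (by
      intro a _ b _ hab
      have := congrArg Fin.val hab
      simp at this
      exact Fin.ext this)]
  rw [Fin.sum_univ_succ]
  congr 1
  · have h1 : Yvec n m σ (j:ℕ) ⟨(j:ℕ)*(m+1)+((0:Fin (m+1)):ℕ), block_lt hn j (Fin.isLt 0)⟩ = 1 := by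
      unfold Yvec
      simp only [PiLp.toLp_apply]
      rw [if_pos (by simp)]
    rw [h1, mul_one]
    congr 1
  · apply Finset.sum_congr rfl
    intro l _
    have hval : ((l.succ : Fin (m+1)) : ℕ) = (l:ℕ)+1 := rfl
    have h1 : Yvec n m σ (j:ℕ) ⟨(j:ℕ)*(m+1)+((l.succ : Fin (m+1)):ℕ), block_lt hn j (l.succ.isLt)⟩
        = σ (l:ℕ) (j:ℕ) := by
      unfold Yvec
      simp only [PiLp.toLp_apply]
      rw [if_neg (by simp [hval]), if_pos (by constructor <;> simp [hval, hjs] <;> omega)]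
      congr 1
      simp [hval]
    rw [h1]
    congr 2

theorem no_small_rational (m d n : ℕ) (hn : n = (m+1)*d)
    (σ : ℕ → ℕ → ℝ)
    (hσ : AlgebraicIndependent ℚ (fun p : Fin m × Fin d => σ (p.1 : ℕ) (p.2 : ℕ)))
    (J : Finset (Fin d)) (e : ℕ) (he : e < J.card * (m+1))
    (B : Submodule ℝ (EuclideanSpace ℝ (Fin n))) (hBrat : IsRationalSubspace B)
    (hBe : finrank ℝ B = e) (hY : ∀ j ∈ J, Yvec n m σ (j:ℕ) ∈ B) : False := by
  classical
  obtain ⟨s, hs, hsp⟩ := hBrat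
  obtain ⟨b, hbs, hbsp, hbind⟩ := exists_linearIndependent ℝ s
  have hbB : Submodule.span ℝ b = B := by rw [hbsp, hsp]
  have hbfin : b.Finite := hbind.setFinite
  haveI : Fintype b := hbfin.fintype
  -- rational lifts
  have hlift : ∀ v : b, ∀ i, ∃ q : ℚ, (v : EuclideanSpace ℝ (Fin n)) i = (q : ℝ) :=
    fun v i => hs v (hbs v.2) i
  set w : b → Fin n → ℚ := fun v i => (hlift v i).choose with hw
  have hwspec : ∀ (v : b) (i), (v : EuclideanSpace ℝ (Fin n)) i = ((w v i : ℚ) : ℝ) :=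
    fun v i => (hlift v i).choose_spec
  -- the matrix and its kernel
  set M : Matrix b (Fin n) ℚ := fun v t => w v t with hM
  set L : (Fin n → ℚ) →ₗ[ℚ] (b → ℚ) := M.mulVecLin with hL
  -- kernel vanishes on J-blocks
  have hker : ∀ q ∈ LinearMap.ker L, ∀ j ∈ J, ∀ l : Fin (m+1),
      q ⟨(j:ℕ)*(m+1)+(l:ℕ), block_lt hn j l.isLt⟩ = 0 := by
    intro q hq j hj
    -- real functional
    set f : EuclideanSpace ℝ (Fin n) →ₗ[ℝ] ℝ :=
      { toFun := fun x => ∑ t, (q t : ℝ) * x t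
        map_add' := by
          intro x y
          simp only [PiLp.add_apply, mul_add]
          rw [Finset.sum_add_distrib]
        map_smul' := by
          intro c x
          simp only [PiLp.smul_apply, smul_eq_mul, RingHom.id_apply, Finset.mul_sum]
          apply Finset.sum_congr rfl
          intros; ring } with hf
    have hfB : B ≤ LinearMap.ker f := by
      rw [← hbB, Submodule.span_le]
      intro v hv
      simp only [SetLike.mem_coe, LinearMap.mem_ker]
      have : f v = ∑ t, ((q t * w ⟨v, hv⟩ t : ℚ) : ℝ) := by
        simp only [hf, LinearMap.coe_mk, AddHom.coe_mk]
        apply Finset.sum_congr rfl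
        intro t _
        have hv2 : v t = ((w ⟨v, hv⟩ t : ℚ) : ℝ) := hwspec ⟨v, hv⟩ t
        rw [hv2]
        push_cast
        ring
      rw [this, ← Rat.cast_sum]
      have hqv : ∑ t, q t * w ⟨v, hv⟩ t = 0 := by
        have := congrFun (LinearMap.mem_ker.mp hq) ⟨v, hv⟩
        rw [Matrix.mulVecLin_apply] at this
        simpa [hL, hM, Matrix.mulVecLin_apply, Matrix.mulVec, dotProduct,
          mul_comm] using this
      rw [hqv, Rat.cast_zero]
    have hfY : f (Yvec n m σ (j:ℕ)) = 0 := hfB (hY j hj) 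
    have hcomp : (↑(q ⟨(j:ℕ)*(m+1), block_lt hn j (Nat.succ_pos m)⟩) : ℝ)
        + ∑ l : Fin m, (↑(q ⟨(j:ℕ)*(m+1)+((l:ℕ)+1), block_lt hn j (by omega)⟩) : ℝ)
            * σ (l:ℕ) (j:ℕ) = 0 := by
      rw [← Yvec_dot hn σ j (fun t => (q t : ℝ))]
      simpa [hf] using hfY
    set c : Fin (m+1) → ℚ := fun i => q ⟨(j:ℕ)*(m+1)+(i:ℕ), block_lt hn j i.isLt⟩ with hc
    have hcall : ∀ i, c i = 0 := by
      apply sigma_indep m d σ hσ j c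
      simpa [hc] using hcomp
    intro l
    have := hcall l
    simpa [hc] using this
  -- dimension count
  set T : Finset (Fin n) := J.biUnion (fun j =>
    Finset.image (fun l : Fin (m+1) => (⟨(j:ℕ)*(m+1)+(l:ℕ), block_lt hn j l.isLt⟩ : Fin n))
      Finset.univ) with hT
  have hTcard : T.card = J.card * (m+1) := by
    rw [hT, Finset.card_biUnion]
    · rw [Finset.sum_congr rfl (fun j _ => ?_), Finset.sum_const, smul_eq_mul]
      rw [Finset.card_image_of_injective _ ?_, Finset.card_univ, Fintype.card_fin]
      intro a c hac
      have := congrArg Fin.val hac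
      simp only [Fin.val_mk] at this
      exact Fin.ext (by omega)
    · intro j1 _ j2 _ hne
      apply Finset.disjoint_left.mpr
      intro t ht1 ht2
      simp only [Finset.mem_image, Finset.mem_univ, true_and] at ht1 ht2
      obtain ⟨l1, rfl⟩ := ht1
      obtain ⟨l2, h2'⟩ := ht2
      have hv := congrArg Fin.val h2'
      simp only [Fin.val_mk] at hv
      exact hne (Fin.val_injective (block_inj l1.isLt l2.isLt hv.symm).1)
  have hTn : T.card ≤ n := Finset.card_le_card (Finset.subset_univ T) |>.trans (by simp)
  set π : (Fin n → ℚ) →ₗ[ℚ] ({x : Fin n // x ∈ T} → ℚ) :=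
    LinearMap.funLeft ℚ ℚ Subtype.val with hπ
  have hπsurj : Function.Surjective π :=
    LinearMap.funLeft_surjective_of_injective ℚ ℚ _ Subtype.val_injective
  have hkerπ : finrank ℚ (LinearMap.ker π) + T.card = n := by
    have h1 := LinearMap.finrank_range_add_finrank_ker π
    rw [LinearMap.range_eq_top.mpr hπsurj, finrank_top,
      Module.finrank_fintype_fun_eq_card, Module.finrank_fintype_fun_eq_card,
      Fintype.card_coe, Fintype.card_fin] at h1
    omega
  have hsub : LinearMap.ker L ≤ LinearMap.ker π := by
    intro q hq
    rw [LinearMap.mem_ker]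
    funext t
    have ht : (t : Fin n) ∈ T := t.2
    simp only [hT, Finset.mem_biUnion, Finset.mem_image, Finset.mem_univ, true_and] at ht
    obtain ⟨j, hj, l, hl⟩ := ht
    simp only [hπ, LinearMap.funLeft_apply, Pi.zero_apply]
    have h0 := hker q hq j hj l
    rwa [hl] at h0
  have hmono : finrank ℚ (LinearMap.ker L) ≤ finrank ℚ (LinearMap.ker π) :=
    Submodule.finrank_mono hsub
  have hcardb : Fintype.card b = e := by
    have h := finrank_span_set_eq_card hbind
    rw [hbB, hBe, Set.toFinset_card] at h
    omega
  have hrank := LinearMap.finrank_range_add_finrank_ker L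
  rw [Module.finrank_fintype_fun_eq_card, Fintype.card_fin] at hrank
  have hrange : finrank ℚ (LinearMap.range L) ≤ e := by
    have := Submodule.finrank_le (LinearMap.range L)
    rwa [Module.finrank_fintype_fun_eq_card, hcardb] at this
  have : T.card ≤ e := by omega
  omega

lemma Yspan_finrank (m d n : ℕ) (hn : n = (m+1)*d) (σ : ℕ → ℕ → ℝ) (J : Finset (Fin d)) :
    finrank ℝ (Submodule.span ℝ
      ((fun j : Fin d => Yvec n m σ (j : ℕ)) '' (J : Set (Fin d)))) = J.card := by
  classical
  set G : EuclideanSpace ℝ (Fin n) →ₗ[ℝ] (Fin d → ℝ) :=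
    { toFun := fun x i => x ⟨(i:ℕ)*(m+1), block_lt hn i (Nat.succ_pos m)⟩
      map_add' := by intro x y; funext i; simp [PiLp.add_apply]
      map_smul' := by intro c x; funext i; simp [PiLp.smul_apply] } with hG
  have hGY : ∀ j : Fin d, G (Yvec n m σ (j:ℕ)) = Pi.single j (1:ℝ) := by
    intro j
    funext i
    simp only [hG, LinearMap.coe_mk, AddHom.coe_mk]
    unfold Yvec
    simp only [PiLp.toLp_apply]
    by_cases h : i = j
    · subst h
      rw [if_pos rfl, Pi.single_eq_same]
    · rw [if_neg, if_neg, Pi.single_eq_of_ne h]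
      · rintro ⟨h1, h2⟩
        have hji : (j:ℕ) < (i:ℕ) := lt_of_mul_lt_mul_right h1 (Nat.zero_le _)
        have h3 : ((j:ℕ)+1)*(m+1) ≤ (i:ℕ)*(m+1) := Nat.mul_le_mul_right _ hji
        linarith
      · intro h1
        exact h (Fin.ext (Nat.eq_of_mul_eq_mul_right (Nat.succ_pos m) h1))
  have hsingle : LinearIndependent ℝ (fun i : Fin d => (Pi.single i (1:ℝ) : Fin d → ℝ)) := by
    have h := (Pi.basisFun ℝ (Fin d)).linearIndependent
    have heq : ⇑(Pi.basisFun ℝ (Fin d)) = fun i => (Pi.single i (1:ℝ) : Fin d → ℝ) :=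
      funext fun i => Pi.basisFun_apply ℝ (Fin d) i
    rwa [heq] at h
  have hInd : LinearIndependent ℝ
      (fun j : (J : Set (Fin d)) => Yvec n m σ ((j : Fin d) : ℕ)) := by
    apply LinearIndependent.of_comp G
    have hcomp : (⇑G ∘ fun j : (J : Set (Fin d)) => Yvec n m σ ((j : Fin d) : ℕ))
        = fun j : (J : Set (Fin d)) => (Pi.single (j : Fin d) (1:ℝ) : Fin d → ℝ) := by
      funext j
      exact hGY j
    rw [hcomp]
    exact hsingle.comp Subtype.val Subtype.val_injective
  rw [Set.image_eq_range, finrank_span_eq_card hInd]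
  simp

/-- If the `md` numbers `σ j i` are algebraically independent over `ℚ`,
then for every nonempty `J ⊆ {1,…,d}` and every `e ∈ {#J, …, #J·(m+1) − 1}`, the subspace
`A_J = span{Y_j : j ∈ J}` is `(e, #J − g(#J,e,n))`-irrational. -/
theorem statement16 (m d n : ℕ) (hm : 1 ≤ m) (hd : 1 ≤ d) (hn : n = (m + 1) * d)
    (σ : ℕ → ℕ → ℝ)
    (hσ : AlgebraicIndependent ℚ (fun p : Fin m × Fin d => σ (p.1 : ℕ) (p.2 : ℕ))) :
    ∀ J : Finset (Fin d), J.Nonempty → ∀ e, J.card ≤ e → e ≤ J.card * (m + 1) - 1 →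
      IsIrrational
        (Submodule.span ℝ ((fun j : Fin d => Yvec n m σ (j : ℕ)) '' (J : Set (Fin d))))
        e (J.card - (J.card + e - n)) := by
  intro J hJ e he1 he2 B hBrat hBe
  have hAr : finrank ℝ (Submodule.span ℝ
      ((fun j : Fin d => Yvec n m σ (j : ℕ)) '' (J : Set (Fin d)))) = J.card :=
    Yspan_finrank m d n hn σ J
  have hkd : J.card ≤ d := le_trans (Finset.card_le_univ J) (by simp)
  have hkn : J.card * (m+1) ≤ n := by
    rw [hn, Nat.mul_comm]
    exact Nat.mul_le_mul_left _ hkd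
  have hk1 : 1 ≤ J.card := Finset.card_pos.mpr hJ
  have hKpos : 1 ≤ J.card * (m+1) := Nat.mul_pos hk1 (Nat.succ_pos m)
  have heK : e < J.card * (m+1) := lt_of_le_of_lt he2 (Nat.sub_lt hKpos one_pos)
  have hen : e ≤ n := le_trans (le_of_lt heK) hkn
  by_contra hcon
  push_neg at hcon
  have hle : finrank ℝ ↥(Submodule.span ℝ
        ((fun j : Fin d => Yvec n m σ (j : ℕ)) '' (J : Set (Fin d))) ⊓ B)
      ≤ finrank ℝ (Submodule.span ℝ
        ((fun j : Fin d => Yvec n m σ (j : ℕ)) '' (J : Set (Fin d)))) :=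
    Submodule.finrank_mono inf_le_left
  rw [hAr] at hcon hle
  have heq : (Submodule.span ℝ
        ((fun j : Fin d => Yvec n m σ (j : ℕ)) '' (J : Set (Fin d)))) ⊓ B
      = Submodule.span ℝ ((fun j : Fin d => Yvec n m σ (j : ℕ)) '' (J : Set (Fin d))) :=
    Submodule.eq_of_le_of_finrank_le inf_le_left (by rw [hAr]; omega)
  have hAB : Submodule.span ℝ ((fun j : Fin d => Yvec n m σ (j : ℕ)) '' (J : Set (Fin d))) ≤ B :=
    inf_eq_left.mp heq
  exact absurd hBe (by
    intro _
    exact no_small_rational m d n hn σ hσ J e heK B hBrat hBe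
      (fun j hj => hAB (Submodule.subset_span ⟨j, Finset.mem_coe.mpr hj, rfl⟩)))
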